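/- Fix reals a > 1/2, ρ > 0, σ_m² > 0, σ_w² > 0, and define f : [0, ∞) → ℝ by f(P) = (2a − 1)·σ_m²·σ_w²/(σ_w² + P) + ρ·P. Then f is strictly convex on [0, ∞), and: (1) if ρ < (2a − 1)·σ_m²/σ_w², then P* = σ_w·√((2a − 1)·σ_m²/ρ) − σ_w² is strictly positive and is the unique minimizer of f on [0, ∞), i.e. f(P*) < f(P) for all P ≥ 0 with P ≠ P*; (2) if ρ ≥ (2a − 1)·σ_m²/σ_w², then 0 is the unique minimizer of f on [0, ∞). -/

import Mathlib

open Set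

noncomputable def f12 (a ρ σm2 σw2 P : ℝ) : ℝ :=
  (2 * a - 1) * σm2 * σw2 / (σw2 + P) + ρ * P

noncomputable def P12 (a ρ σm2 σw2 : ℝ) : ℝ :=
  Real.sqrt σw2 * Real.sqrt ((2 * a - 1) * σm2 / ρ) - σw2

theorem stmt_12 (a ρ σm2 σw2 : ℝ) (ha : 1 / 2 < a) (hρ : 0 < ρ)
    (hm : 0 < σm2) (hw : 0 < σw2) :
    StrictConvexOn ℝ (Ici 0) (fun P => f12 a ρ σm2 σw2 P) ∧
    (ρ < (2 * a - 1) * σm2 / σw2 →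
      0 < P12 a ρ σm2 σw2 ∧
      ∀ P : ℝ, 0 ≤ P → P ≠ P12 a ρ σm2 σw2 →
        f12 a ρ σm2 σw2 (P12 a ρ σm2 σw2) < f12 a ρ σm2 σw2 P) ∧
    ((2 * a - 1) * σm2 / σw2 ≤ ρ →
      ∀ P : ℝ, 0 ≤ P → P ≠ 0 → f12 a ρ σm2 σw2 0 < f12 a ρ σm2 σw2 P) := by
  have hc : 0 < (2 * a - 1) * σm2 := by nlinarith
  set c := (2 * a - 1) * σm2 with hcdef
  refine ⟨?_, ?_, ?_⟩
  · refine ⟨convex_Ici 0, ?_⟩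
    intro x hx y hy hxy p q hp hq hpq
    simp only [smul_eq_mul, f12]
    have hx0 : (0:ℝ) ≤ x := hx
    have hy0 : (0:ℝ) ≤ y := hy
    have hdx : 0 < σw2 + x := by linarith
    have hdy : 0 < σw2 + y := by linarith
    have hdz : 0 < σw2 + (p * x + q * y) := by
      nlinarith [mul_nonneg hp.le hx0, mul_nonneg hq.le hy0]
    have hq' : q = 1 - p := by linarith
    subst hq'
    have expand : p * (c * σw2 / (σw2 + x)) + (1 - p) * (c * σw2 / (σw2 + y))
        - c * σw2 / (σw2 + (p * x + (1 - p) * y))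
        = c * σw2 * (p * (1 - p) * (x - y) ^ 2) /
          ((σw2 + x) * (σw2 + y) * (σw2 + (p * x + (1 - p) * y))) := by
      field_simp
      ring
    have hsub : x - y ≠ 0 := sub_ne_zero.mpr hxy
    have hxy2 : 0 < (x - y) ^ 2 :=
      lt_of_le_of_ne (sq_nonneg _) (Ne.symm (pow_ne_zero 2 hsub))
    have hpos : 0 < c * σw2 * (p * (1 - p) * (x - y) ^ 2) /
        ((σw2 + x) * (σw2 + y) * (σw2 + (p * x + (1 - p) * y))) := by
      have h1p : 0 < 1 - p := hq
      positivity
    nlinarith [hpos, expand]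
  · intro hρ'
    have hcw : ρ * σw2 < c := by
      rw [lt_div_iff₀ hw] at hρ'; linarith
    obtain ⟨u, hupos, hu2, hP12⟩ : ∃ u : ℝ, 0 < u ∧ ρ * u ^ 2 = c * σw2 ∧
        P12 a ρ σm2 σw2 = u - σw2 := by
      refine ⟨Real.sqrt σw2 * Real.sqrt (c / ρ), ?_, ?_, rfl⟩
      · have h1 : 0 < Real.sqrt σw2 := Real.sqrt_pos.mpr hw
        have h2 : 0 < Real.sqrt (c / ρ) := Real.sqrt_pos.mpr (by positivity)
        positivity
      · rw [mul_pow, Real.sq_sqrt hw.le, Real.sq_sqrt (by positivity : (0:ℝ) ≤ c / ρ)]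
        field_simp
    have hPpos : 0 < P12 a ρ σm2 σw2 := by
      rw [hP12]
      have h1 : ρ * σw2 ^ 2 < ρ * u ^ 2 := by rw [hu2]; nlinarith
      have h2 : σw2 ^ 2 < u ^ 2 := lt_of_mul_lt_mul_left h1 hρ.le
      nlinarith
    refine ⟨hPpos, ?_⟩
    intro P hP hne
    have hD : 0 < σw2 + P := by linarith
    rw [← sub_pos]
    have expand : f12 a ρ σm2 σw2 P - f12 a ρ σm2 σw2 (P12 a ρ σm2 σw2)
        = ρ * ((σw2 + P) - u) ^ 2 / (σw2 + P) := by
      simp only [f12, hP12, ← hcdef]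
      rw [show σw2 + (u - σw2) = u by ring,
        show c * σw2 = ρ * u ^ 2 from hu2.symm]
      field_simp
      ring
    rw [expand]
    have hsub : (σw2 + P) - u ≠ 0 := by
      rw [hP12] at hne
      intro h; apply hne; linarith [sub_eq_zero.mp h]
    have : 0 < ((σw2 + P) - u) ^ 2 :=
      lt_of_le_of_ne (sq_nonneg _) (Ne.symm (pow_ne_zero 2 hsub))
    positivity
  · intro hρ' P hP hne
    have hcw : c ≤ ρ * σw2 := by
      rw [div_le_iff₀ hw] at hρ'; linarith
    have hPpos : 0 < P := lt_of_le_of_ne hP (Ne.symm hne)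
    have hD : 0 < σw2 + P := by linarith
    rw [← sub_pos]
    have expand : f12 a ρ σm2 σw2 P - f12 a ρ σm2 σw2 0
        = P * (ρ * σw2 * (σw2 + P) - c * σw2) / (σw2 * (σw2 + P)) := by
      simp only [f12, ← hcdef]
      field_simp
      ring
    rw [expand]
    have hnum : 0 < ρ * σw2 * (σw2 + P) - c * σw2 := by nlinarith
    positivity
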